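/- For x ∈ H²(𝔻)^⊥ (the orthogonal complement of the Hardy space in L²(𝕋)) and ξ ∈ 𝔻, the projection of x·K_ξ onto H²(𝔻) equals x̃(ξ)·K_ξ, where x̃ is the Poisson extension of x; that is, P_{H²(𝔻)}(x K_ξ) = x̃(ξ) K_ξ. -/

import Mathlib

open MeasureTheory Complex Filter Topology
open scoped ENNReal NNReal

noncomputable section

namespace HardyPolydisc

/-- The `n`-torus `𝕋ⁿ`, realized as the product of `n` unit additive circles,
carrying the (normalized) Haar probability measure `volume`. -/
abbrev Torus (n : ℕ) := Fin n → AddCircle (1 : ℝ)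

/-- The normalized Lebesgue (Haar) measure `m_n` on the `n`-torus. -/
abbrev torusMeasure (n : ℕ) : Measure (Torus n) := volume

/-- A point of the additive circle viewed as a complex number of modulus one. -/
def bpt (t : AddCircle (1 : ℝ)) : ℂ := (AddCircle.toCircle t : ℂ)

/-- `L²(𝕋ⁿ)`. -/
abbrev L2T (n : ℕ) := Lp ℂ 2 (torusMeasure n)

/-- The analytic monomial `e_k(ζ) = ζ₁^{k₁} ⋯ ζₙ^{kₙ}` for `k ∈ ℤ₊ⁿ`. -/
def mon {n : ℕ} (k : Fin n → ℕ) : Torus n → ℂ := fun ζ => ∏ j, bpt (ζ j) ^ (k j)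

lemma mon_memℒp {n : ℕ} (k : Fin n → ℕ) : MemLp (mon k) 2 (torusMeasure n) := by
  have hc : Continuous (mon (n := n) k) := by
    apply continuous_finset_prod
    intro j _
    exact ((continuous_subtype_val.comp AddCircle.continuous_toCircle).comp
      (continuous_apply j)).pow _
  refine MemLp.of_bound hc.aestronglyMeasurable 1 ?_
  filter_upwards with ζ
  have h : ‖mon k ζ‖ = ∏ j, ‖bpt (ζ j)‖ ^ (k j) := by simp [mon]
  rw [h]
  have h1 : ∀ j : Fin n, ‖bpt (ζ j)‖ = 1 := by
    intro j; simp [bpt]; first | exact Circle.norm_coe _ | exact Circle.abs_coe _ | simp [Circle.norm_coe] | exact norm_toCircle _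
  simp [h1]

/-- The Hardy space `H²(𝔻ⁿ)`, identified (via radial boundary values) with the closed
subspace of `L²(𝕋ⁿ)` spanned by the analytic monomials. -/
def hardy (n : ℕ) : Submodule ℂ (L2T n) :=
  (Submodule.span ℂ
    (Set.range fun k : Fin n → ℕ => (mon_memℒp k).toLp (mon k))).topologicalClosure

instance (n : ℕ) : CompleteSpace (hardy n) :=
  IsClosed.completeSpace_coe (hs := Submodule.isClosed_topologicalClosure _)

/-- Multiplication by a bounded measurable symbol `φ ∈ L^∞(𝕋ⁿ)`, as a bounded operator
on `L²(𝕋ⁿ)`. -/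
def mulOp {n : ℕ} {φ : Torus n → ℂ} (hφ : MemLp φ ⊤ (torusMeasure n)) :
    L2T n →L[ℂ] L2T n :=
  LinearMap.mkContinuous
    { toFun := fun f => ((Lp.memLp f).smul (r := 2) hφ).toLp (φ • ⇑f)
      map_add' := by
        intro f g
        refine (MemLp.toLp_congr _ (((Lp.memLp f).smul (r := 2) hφ).add
          (((Lp.memLp g).smul (r := 2) hφ))) ?_).trans (MemLp.toLp_add _ _)
        filter_upwards [Lp.coeFn_add f g] with x hx
        simp only [Pi.smul_apply, Pi.mul_apply, Pi.add_apply, smul_eq_mul, hx]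
        ring
      map_smul' := by
        intro c f
        have key : MemLp.toLp (φ • ⇑(c • f)) ((Lp.memLp (c • f)).smul (r := 2) hφ)
            = c • MemLp.toLp (φ • ⇑f) ((Lp.memLp f).smul (r := 2) hφ) := by
          refine (MemLp.toLp_congr _ (((Lp.memLp f).smul (r := 2) hφ).const_smul c)
            ?_).trans (MemLp.toLp_const_smul c _)
          filter_upwards [Lp.coeFn_smul c f] with x hx
          simp only [Pi.smul_apply, Pi.mul_apply, smul_eq_mul, hx]
          ring
        simpa using key }
    (eLpNorm φ ⊤ (torusMeasure n)).toReal
    (by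
      intro f
      simp only [LinearMap.coe_mk, AddHom.coe_mk]
      rw [Lp.norm_toLp]
      have h := eLpNorm_smul_le_mul_eLpNorm (Lp.aestronglyMeasurable f) hφ.aestronglyMeasurable
        (p := ⊤) (q := 2) (r := 2)
      calc (eLpNorm (φ • ⇑f) 2 (torusMeasure n)).toReal
          ≤ ((eLpNorm φ ⊤ (torusMeasure n)) * eLpNorm (⇑f) 2 (torusMeasure n)).toReal := by
            apply ENNReal.toReal_mono _ h
            exact ENNReal.mul_ne_top hφ.eLpNorm_ne_top (Lp.memLp f).eLpNorm_ne_top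
        _ = (eLpNorm φ ⊤ (torusMeasure n)).toReal * ‖f‖ := by
            rw [ENNReal.toReal_mul, Lp.norm_def]
        )


/-- Complex conjugation preserves `ℒ^p` membership. -/
lemma memℒp_conj {α : Type*} [MeasurableSpace α] {μ : Measure α} {φ : α → ℂ} {p : ℝ≥0∞}
    (hφ : MemLp φ p μ) : MemLp (fun ζ => (starRingEnd ℂ) (φ ζ)) p μ := by
  have hm : AEStronglyMeasurable (fun ζ => (starRingEnd ℂ) (φ ζ)) μ :=
    Complex.continuous_conj.comp_aestronglyMeasurable hφ.aestronglyMeasurable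
  refine ⟨hm, ?_⟩
  have h : eLpNorm (starRingEnd ℂ ∘ φ) p μ = eLpNorm φ p μ := eLpNorm_conj (𝕜 := ℂ) φ p μ
  have h2 : (fun ζ => (starRingEnd ℂ) (φ ζ)) = starRingEnd ℂ ∘ φ := rfl
  rw [h2, h]
  exact hφ.2

/-- The product of two essentially bounded functions is essentially bounded. -/
lemma memℒp_top_mul {α : Type*} [MeasurableSpace α] {μ : Measure α} {φ ψ : α → ℂ}
    (hφ : MemLp φ ⊤ μ) (hψ : MemLp ψ ⊤ μ) : MemLp (fun ζ => φ ζ * ψ ζ) ⊤ μ := by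
  have := hψ.smul (φ := φ) (p := (⊤ : ℝ≥0∞)) (q := ⊤) (r := ⊤) hφ
  exact this

/-- The Toeplitz operator `T_φ = P_{H²} M_φ` on `H²(𝔻ⁿ)`. -/
def toeplitz {n : ℕ} {φ : Torus n → ℂ} (hφ : MemLp φ ⊤ (torusMeasure n)) :
    hardy n →L[ℂ] hardy n :=
  (Submodule.orthogonalProjectionOnto (hardy n)).comp ((mulOp hφ).comp (hardy n).subtypeL)

/-- The Hankel operator `H_φ = P_{H²⊥} M_φ : H²(𝔻ⁿ) → H²(𝔻ⁿ)^⊥`. -/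
def hankel {n : ℕ} {φ : Torus n → ℂ} (hφ : MemLp φ ⊤ (torusMeasure n)) :
    hardy n →L[ℂ] ↥(hardy n)ᗮ :=
  (Submodule.orthogonalProjectionOnto (hardy n)ᗮ).comp ((mulOp hφ).comp (hardy n).subtypeL)

/-- The Poisson kernel `P(ξ, ζ) = ∏ⱼ (1-|ξⱼ|²)/|1-ξⱼ conj(ζⱼ)|²` of the polydisc. -/
def poisson {n : ℕ} (ξ : Fin n → ℂ) (ζ : Torus n) : ℝ :=
  ∏ j, (1 - ‖ξ j‖ ^ 2) / ‖1 - ξ j * (starRingEnd ℂ) (bpt (ζ j))‖ ^ 2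

/-- The boundary values of the normalized Szegő kernel
`k_ξ(ζ) = ∏ⱼ √(1-|ξⱼ|²)/(1-conj(ξⱼ)ζⱼ)`. -/
def szego {n : ℕ} (ξ : Fin n → ℂ) : Torus n → ℂ := fun ζ =>
  ∏ j, (Real.sqrt (1 - ‖ξ j‖ ^ 2) : ℂ) / (1 - (starRingEnd ℂ) (ξ j) * bpt (ζ j))

/-- The normalized Szegő kernel as an element of `L²(𝕋ⁿ)` (defined to be `0` in the
degenerate case `ξ ∉ 𝔻ⁿ`, where its boundary values are not square-integrable). -/
def szegoLp {n : ℕ} (ξ : Fin n → ℂ) : L2T n :=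
  @dite _ (MemLp (szego ξ) 2 (torusMeasure n)) (Classical.dec _)
    (fun h => h.toLp (szego ξ)) (fun _ => 0)

/-- The Berezin transform `Ã(ξ) = ⟨A k_ξ, k_ξ⟩` of an operator on `H²(𝔻ⁿ)`
(using that `k_ξ ∈ H²(𝔻ⁿ)`, i.e. `P_{H²} k_ξ = k_ξ`). -/
def berezin {n : ℕ} (A : hardy n →L[ℂ] hardy n) (ξ : Fin n → ℂ) : ℂ :=
  inner (𝕜 := ℂ) (szegoLp ξ)
    ((A (Submodule.orthogonalProjectionOnto (hardy n) (szegoLp ξ)) : L2T n))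

/-- `F → φ` *radially*: for a.e. `ζ ∈ 𝕋ⁿ`, `F(rζ) → φ(ζ)` as `r → 1⁻`. -/
def RadialTo {n : ℕ} (F : (Fin n → ℂ) → ℂ) (φ : Torus n → ℂ) : Prop :=
  ∀ᵐ ζ ∂(torusMeasure n),
    Tendsto (fun r : ℝ => F fun j => (r : ℂ) * bpt (ζ j)) (𝓝[<] 1) (𝓝 (φ ζ))


section Aux

open AddCircle

instance : IsProbabilityMeasure (volume : Measure (AddCircle (1:ℝ))) :=
  ⟨by rw [AddCircle.measure_univ]; norm_num⟩

instance : IsProbabilityMeasure (torusMeasure 1) := by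
  rw [show torusMeasure 1 = volume from rfl, MeasureTheory.volume_pi]; infer_instance

lemma haar_eq : (AddCircle.haarAddCircle : Measure (AddCircle (1:ℝ))) = volume := by
  rw [AddCircle.volume_eq_smul_haarAddCircle]; simp

lemma integral_fourier_unit (n : ℤ) :
    ∫ t, fourier n t ∂(volume : Measure (AddCircle (1:ℝ))) = if n = 0 then 1 else 0 := by
  rw [← haar_eq]
  split_ifs with h
  · subst h
    have : ⇑(fourier (T := (1:ℝ)) 0) = (fun _ => 1 : AddCircle (1:ℝ) → ℂ) := by
      ext1; exact fourier_zero
    rw [this]; simp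
  · convert integral_eq_zero_of_add_right_eq_neg (μ := AddCircle.haarAddCircle)
      (fourier_add_half_inv_index h one_pos)

lemma integral_funUnique (F : AddCircle (1:ℝ) → ℂ) :
    ∫ ζ : Torus 1, F (ζ 0) ∂(torusMeasure 1) = ∫ t, F t := by
  have h := (volume_preserving_funUnique (Fin 1) (AddCircle (1:ℝ))).integral_comp
    (MeasurableEquiv.measurableEmbedding _) F
  convert h using 1
  rfl

lemma continuous_bpt : Continuous bpt :=
  continuous_subtype_val.comp AddCircle.continuous_toCircle

lemma bpt_norm (t : AddCircle (1:ℝ)) : ‖bpt t‖ = 1 := by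
  simp [bpt, Circle.norm_coe]

lemma bpt_eq_fourier (t : AddCircle (1:ℝ)) : bpt t = fourier 1 t := by
  rw [fourier_one]; rfl

lemma bpt_pow (n : ℕ) (t : AddCircle (1:ℝ)) : bpt t ^ n = fourier (n : ℤ) t := by
  induction n with
  | zero => simp [fourier_zero]
  | succ k ih =>
      rw [pow_succ, ih, bpt_eq_fourier, ← fourier_add]
      norm_num

lemma conj_bpt_pow (n : ℕ) (t : AddCircle (1:ℝ)) :
    (starRingEnd ℂ) (bpt t) ^ n = fourier (-(n : ℤ)) t := by
  rw [← map_pow, bpt_pow, ← fourier_neg]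

lemma integral_char (a b : ℕ) :
    ∫ ζ : Torus 1, bpt (ζ 0) ^ a * (starRingEnd ℂ) (bpt (ζ 0)) ^ b ∂(torusMeasure 1)
      = if a = b then 1 else 0 := by
  have h : ∀ t : AddCircle (1:ℝ),
      bpt t ^ a * (starRingEnd ℂ) (bpt t) ^ b = fourier ((a : ℤ) - b) t := by
    intro t
    rw [bpt_pow, conj_bpt_pow, sub_eq_add_neg, fourier_add]
  calc ∫ ζ : Torus 1, bpt (ζ 0) ^ a * (starRingEnd ℂ) (bpt (ζ 0)) ^ b ∂(torusMeasure 1)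
      = ∫ ζ : Torus 1, (fun t => fourier ((a:ℤ) - b) t) (ζ 0) ∂(torusMeasure 1) := by
        simp_rw [h]
    _ = if a = b then 1 else 0 := by
        rw [integral_funUnique, integral_fourier_unit]
        simp [sub_eq_zero]

end Aux
section Aux2

lemma hasSum_integral_geometric {f u : Torus 1 → ℂ} (hf : Integrable f (torusMeasure 1))
    (hu : AEStronglyMeasurable u (torusMeasure 1)) {r : ℝ} (hr : r < 1)
    (hub : ∀ ζ, ‖u ζ‖ ≤ r) :
    HasSum (fun m : ℕ => ∫ ζ, f ζ * u ζ ^ m ∂(torusMeasure 1))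
      (∫ ζ, f ζ * (1 - u ζ)⁻¹ ∂(torusMeasure 1)) := by
  have hr0 : (0:ℝ) ≤ r := le_trans (norm_nonneg _) (hub (fun _ => 0))
  have hint : ∀ m : ℕ, Integrable (fun ζ => f ζ * u ζ ^ m) (torusMeasure 1) := by
    intro m
    have h1 : Integrable (fun ζ => u ζ ^ m * f ζ) (torusMeasure 1) :=
      hf.bdd_mul (hu.pow m) (Filter.Eventually.of_forall fun ζ => by
        rw [norm_pow]; exact pow_le_pow_left₀ (norm_nonneg _) (hub ζ) m)
    simpa [mul_comm] using h1
  have hsum : Summable fun m : ℕ => ∫ ζ, ‖f ζ * u ζ ^ m‖ ∂(torusMeasure 1) := by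
    apply Summable.of_nonneg_of_le (fun m => integral_nonneg fun ζ => norm_nonneg _)
      (fun m => ?_) ((summable_geometric_of_lt_one hr0 hr).mul_left (∫ ζ, ‖f ζ‖ ∂(torusMeasure 1)))
    calc ∫ ζ, ‖f ζ * u ζ ^ m‖ ∂(torusMeasure 1)
        ≤ ∫ ζ, ‖f ζ‖ * r ^ m ∂(torusMeasure 1) := by
          apply integral_mono (hint m).norm (hf.norm.mul_const _)
          intro ζ
          show ‖f ζ * u ζ ^ m‖ ≤ ‖f ζ‖ * r ^ m
          rw [norm_mul, norm_pow]
          exact mul_le_mul_of_nonneg_left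
            (pow_le_pow_left₀ (norm_nonneg _) (hub ζ) m) (norm_nonneg _)
      _ = (∫ ζ, ‖f ζ‖ ∂(torusMeasure 1)) * r ^ m := by rw [integral_mul_const]
  have key := hasSum_integral_of_summable_integral_norm hint hsum
  have heq : ∀ ζ, (∑' m : ℕ, f ζ * u ζ ^ m) = f ζ * (1 - u ζ)⁻¹ := fun ζ => by
    rw [tsum_mul_left, tsum_geometric_of_norm_lt_one (lt_of_le_of_lt (hub ζ) hr)]
  simp_rw [heq] at key
  exact key

lemma hasSum_integral_mul_geom {f : Torus 1 → ℂ} (hf : Integrable f (torusMeasure 1))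
    {ξ : ℂ} (hξ : ‖ξ‖ < 1) :
    HasSum (fun m : ℕ => (starRingEnd ℂ) ξ ^ m * ∫ ζ, f ζ * bpt (ζ 0) ^ m ∂(torusMeasure 1))
      (∫ ζ, f ζ * (1 - (starRingEnd ℂ) ξ * bpt (ζ 0))⁻¹ ∂(torusMeasure 1)) := by
  have hu : AEStronglyMeasurable (fun ζ : Torus 1 => (starRingEnd ℂ) ξ * bpt (ζ 0))
      (torusMeasure 1) :=
    (continuous_const.mul (continuous_bpt.comp (continuous_apply 0))).aestronglyMeasurable
  have hub : ∀ ζ : Torus 1, ‖(starRingEnd ℂ) ξ * bpt (ζ 0)‖ ≤ ‖ξ‖ := fun ζ => by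
    rw [norm_mul, bpt_norm, RCLike.norm_conj, mul_one]
  have h := hasSum_integral_geometric hf hu hξ hub
  have heq : ∀ m : ℕ, ∫ ζ, f ζ * ((starRingEnd ℂ) ξ * bpt (ζ 0)) ^ m ∂(torusMeasure 1)
      = (starRingEnd ℂ) ξ ^ m * ∫ ζ, f ζ * bpt (ζ 0) ^ m ∂(torusMeasure 1) := by
    intro m
    rw [← integral_const_mul]
    exact integral_congr_ae (Filter.Eventually.of_forall fun ζ => by ring)
  simp_rw [heq] at h
  exact h

lemma hasSum_integral_mul_geom' {f : Torus 1 → ℂ} (hf : Integrable f (torusMeasure 1))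
    {ξ : ℂ} (hξ : ‖ξ‖ < 1) :
    HasSum (fun m : ℕ => ξ ^ m * ∫ ζ, f ζ * (starRingEnd ℂ) (bpt (ζ 0)) ^ m ∂(torusMeasure 1))
      (∫ ζ, f ζ * (1 - ξ * (starRingEnd ℂ) (bpt (ζ 0)))⁻¹ ∂(torusMeasure 1)) := by
  have hu : AEStronglyMeasurable (fun ζ : Torus 1 => ξ * (starRingEnd ℂ) (bpt (ζ 0)))
      (torusMeasure 1) :=
    (continuous_const.mul (Complex.continuous_conj.comp
      (continuous_bpt.comp (continuous_apply 0)))).aestronglyMeasurable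
  have hub : ∀ ζ : Torus 1, ‖ξ * (starRingEnd ℂ) (bpt (ζ 0))‖ ≤ ‖ξ‖ := fun ζ => by
    rw [norm_mul, RCLike.norm_conj, bpt_norm, mul_one]
  have h := hasSum_integral_geometric hf hu hξ hub
  have heq : ∀ m : ℕ, ∫ ζ, f ζ * (ξ * (starRingEnd ℂ) (bpt (ζ 0))) ^ m ∂(torusMeasure 1)
      = ξ ^ m * ∫ ζ, f ζ * (starRingEnd ℂ) (bpt (ζ 0)) ^ m ∂(torusMeasure 1) := by
    intro m
    rw [← integral_const_mul]
    exact integral_congr_ae (Filter.Eventually.of_forall fun ζ => by ring)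
  simp_rw [heq] at h
  exact h

end Aux2
section Aux3

lemma poisson_eq {ξ : ℂ} (hξ : ‖ξ‖ < 1) (ζ : Torus 1) :
    ((poisson (fun _ => ξ) ζ : ℝ) : ℂ)
      = (1 - (starRingEnd ℂ) ξ * bpt (ζ 0))⁻¹
        + (1 - ξ * (starRingEnd ℂ) (bpt (ζ 0)))⁻¹ - 1 := by
  set w := bpt (ζ 0) with hwdef
  have hww : w * (starRingEnd ℂ) w = 1 := by
    rw [Complex.mul_conj]
    norm_cast
    rw [Complex.normSq_eq_norm_sq, hwdef, bpt_norm]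
    norm_num
  have hd : (1 - (starRingEnd ℂ) ξ * w) ≠ 0 := by
    intro h
    have h1 : (1 : ℂ) = (starRingEnd ℂ) ξ * w := sub_eq_zero.mp h
    have h2 : ‖(starRingEnd ℂ) ξ * w‖ = ‖ξ‖ := by
      rw [norm_mul, RCLike.norm_conj, hwdef, bpt_norm, mul_one]
    rw [← h1, norm_one] at h2
    rw [← h2] at hξ
    exact lt_irrefl _ hξ
  have hdc : (1 - ξ * (starRingEnd ℂ) w) ≠ 0 := by
    intro h
    apply hd
    have := congrArg (starRingEnd ℂ) h
    simpa [map_sub, map_mul, Complex.conj_conj] using this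
  have hp : poisson (fun _ => ξ) ζ = (1 - ‖ξ‖ ^ 2) / ‖1 - ξ * (starRingEnd ℂ) w‖ ^ 2 := by
    simp [poisson, hwdef]
  have hnum : ((1 - ‖ξ‖ ^ 2 : ℝ) : ℂ) = 1 - ξ * (starRingEnd ℂ) ξ := by
    rw [Complex.ofReal_sub, Complex.ofReal_one,
      ← Complex.normSq_eq_norm_sq, ← Complex.mul_conj]
  have hconj : (starRingEnd ℂ) (1 - ξ * (starRingEnd ℂ) w) = 1 - (starRingEnd ℂ) ξ * w := by
    simp [map_sub, map_mul, Complex.conj_conj]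
  have hden : ((‖1 - ξ * (starRingEnd ℂ) w‖ ^ 2 : ℝ) : ℂ)
      = (1 - ξ * (starRingEnd ℂ) w) * (1 - (starRingEnd ℂ) ξ * w) := by
    rw [← Complex.normSq_eq_norm_sq, ← Complex.mul_conj, hconj]
  rw [hp, Complex.ofReal_div, hnum, hden]
  rw [inv_eq_one_div, inv_eq_one_div, div_add_div _ _ hd hdc, div_sub_one (mul_ne_zero hd hdc),
    div_eq_div_iff (mul_ne_zero hdc hd) (mul_ne_zero hd hdc)]
  linear_combination (ξ * (starRingEnd ℂ) ξ * ((1 - (starRingEnd ℂ) ξ * w) * (1 - ξ * (starRingEnd ℂ) w))) * hww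

end Aux3
/-- If `x ⊥ H²(𝔻)` then `P_{H²(𝔻)}(x K_ξ) = x̃(ξ) K_ξ`, where `x̃` is the
Poisson extension of `x` and `K_ξ` the (unnormalized) Szegő kernel. -/
theorem proj_mul_szegoKernel_of_mem_orthogonal {x : L2T 1}
    (hx : x ∈ (hardy 1)ᗮ) {ξ : ℂ} (hξ : ‖ξ‖ < 1)
    (K : Torus 1 → ℂ) (hKdef : K = fun ζ => 1 / (1 - (starRingEnd ℂ) ξ * bpt (ζ 0)))
    (hK : MemLp K 2 (torusMeasure 1))
    (hxK : MemLp (fun ζ => (x : Torus 1 → ℂ) ζ * K ζ) 2 (torusMeasure 1)) :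
    (Submodule.orthogonalProjectionOnto (hardy 1) (hxK.toLp _) : L2T 1)
      = (∫ ζ, (x : Torus 1 → ℂ) ζ * (poisson (fun _ => ξ) ζ : ℂ) ∂(torusMeasure 1))
          • hK.toLp K := by
  classical
  have hxint : Integrable (x : Torus 1 → ℂ) (torusMeasure 1) :=
    (Lp.memLp x).integrable one_le_two
  have hKinv : K = fun ζ => (1 - (starRingEnd ℂ) ξ * bpt (ζ 0))⁻¹ := by
    rw [hKdef]; funext ζ; rw [one_div]
  have hconjK : ∀ ζ : Torus 1,
      (starRingEnd ℂ) (K ζ) = (1 - ξ * (starRingEnd ℂ) (bpt (ζ 0)))⁻¹ := by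
    intro ζ
    rw [hKinv]
    simp [map_inv₀, map_sub, map_mul, Complex.conj_conj]
  -- orthogonality of x to analytic monomials
  have horth : ∀ j : ℕ, ∫ ζ, (starRingEnd ℂ) (bpt (ζ 0)) ^ j * (x : Torus 1 → ℂ) ζ
      ∂(torusMeasure 1) = 0 := by
    intro j
    have hmem : (mon_memℒp (fun _ : Fin 1 => j)).toLp (mon (fun _ : Fin 1 => j)) ∈ hardy 1 :=
      (Submodule.le_topologicalClosure _) (Submodule.subset_span ⟨_, rfl⟩)
    have h0 : (inner ℂ ((mon_memℒp (fun _ : Fin 1 => j)).toLp (mon (fun _ : Fin 1 => j))) x : ℂ)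
        = 0 := (Submodule.mem_orthogonal _ x).1 hx _ hmem
    rw [L2.inner_def] at h0
    rw [← h0]
    apply integral_congr_ae
    filter_upwards [MemLp.coeFn_toLp (mon_memℒp (fun _ : Fin 1 => j))] with ζ hζ
    rw [RCLike.inner_apply, hζ]
    simp [mon, Fin.prod_univ_one, map_pow]
    ring
  have horth' : ∀ j : ℕ, ∫ ζ, (x : Torus 1 → ℂ) ζ * (starRingEnd ℂ) (bpt (ζ 0)) ^ j
      ∂(torusMeasure 1) = 0 := by
    intro j
    rw [← horth j]
    exact integral_congr_ae (Filter.Eventually.of_forall fun ζ => mul_comm _ _)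
  have hx0 : ∫ ζ, (x : Torus 1 → ℂ) ζ ∂(torusMeasure 1) = 0 := by
    have := horth 0; simpa using this
  -- expansion of ∫ x K
  have hA : HasSum
      (fun m : ℕ => (starRingEnd ℂ) ξ ^ m *
        ∫ ζ, (x : Torus 1 → ℂ) ζ * bpt (ζ 0) ^ m ∂(torusMeasure 1))
      (∫ ζ, (x : Torus 1 → ℂ) ζ * K ζ ∂(torusMeasure 1)) := by
    have h := hasSum_integral_mul_geom hxint hξ
    rw [hKinv]
    exact h
  -- ∫ x conj K = 0
  have hCK : ∫ ζ, (x : Torus 1 → ℂ) ζ * (starRingEnd ℂ) (K ζ) ∂(torusMeasure 1) = 0 := by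
    have h := hasSum_integral_mul_geom' hxint hξ
    have hfun : (fun m : ℕ => ξ ^ m *
        ∫ ζ, (x : Torus 1 → ℂ) ζ * (starRingEnd ℂ) (bpt (ζ 0)) ^ m ∂(torusMeasure 1))
        = fun _ => (0 : ℂ) := by
      funext m; rw [horth' m, mul_zero]
    rw [hfun] at h
    have h0 := h.unique hasSum_zero
    rw [← h0]
    exact integral_congr_ae (Filter.Eventually.of_forall fun ζ => by simp only [hconjK])
  -- integrability facts
  have hxK_int : Integrable (fun ζ => (x : Torus 1 → ℂ) ζ * K ζ) (torusMeasure 1) :=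
    hxK.integrable one_le_two
  have hxCK_int : Integrable (fun ζ => (x : Torus 1 → ℂ) ζ * (starRingEnd ℂ) (K ζ))
      (torusMeasure 1) := by
    have h := L2.integrable_inner (𝕜 := ℂ) (hK.toLp K) x
    apply h.congr
    filter_upwards [MemLp.coeFn_toLp hK] with ζ hζ
    rw [RCLike.inner_apply, hζ, mul_comm]
  -- the Poisson integral equals ∫ x K
  have hc : (∫ ζ, (x : Torus 1 → ℂ) ζ * (poisson (fun _ => ξ) ζ : ℂ) ∂(torusMeasure 1))
      = ∫ ζ, (x : Torus 1 → ℂ) ζ * K ζ ∂(torusMeasure 1) := by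
    have hsplit : (∫ ζ, (x : Torus 1 → ℂ) ζ * (poisson (fun _ => ξ) ζ : ℂ) ∂(torusMeasure 1))
        = ∫ ζ, ((x : Torus 1 → ℂ) ζ * K ζ + (x : Torus 1 → ℂ) ζ * (starRingEnd ℂ) (K ζ)
            - (x : Torus 1 → ℂ) ζ) ∂(torusMeasure 1) := by
      apply integral_congr_ae
      apply Filter.Eventually.of_forall
      intro ζ
      have hK' : ∀ η : Torus 1, K η = (1 - (starRingEnd ℂ) ξ * bpt (η 0))⁻¹ := by
        intro η; rw [hKinv]
      simp only [poisson_eq hξ, ← hconjK, ← hK']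
      ring
    have hadd : Integrable (fun ζ => (x : Torus 1 → ℂ) ζ * K ζ
        + (x : Torus 1 → ℂ) ζ * (starRingEnd ℂ) (K ζ)) (torusMeasure 1) :=
      hxK_int.add hxCK_int
    rw [hsplit, integral_sub hadd hxint, integral_add hxK_int hxCK_int, hCK, hx0]
    ring
  have hcw : ∀ ζ : Torus 1, (starRingEnd ℂ) (bpt (ζ 0)) * bpt (ζ 0) = 1 := by
    intro ζ
    rw [mul_comm, Complex.mul_conj]
    norm_cast
    rw [Complex.normSq_eq_norm_sq, bpt_norm]
    norm_num
  -- Claim 1 : ∫ conj(w)^n (x K) = ξ̄^n ∫ x K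
  have hClaim1 : ∀ n : ℕ,
      ∫ ζ, (starRingEnd ℂ) (bpt (ζ 0)) ^ n * ((x : Torus 1 → ℂ) ζ * K ζ) ∂(torusMeasure 1)
        = (starRingEnd ℂ) ξ ^ n * ∫ ζ, (x : Torus 1 → ℂ) ζ * K ζ ∂(torusMeasure 1) := by
    intro n
    have hfint : Integrable
        (fun ζ => (starRingEnd ℂ) (bpt (ζ 0)) ^ n * (x : Torus 1 → ℂ) ζ) (torusMeasure 1) := by
      apply hxint.bdd_mul (c := 1)
      · exact ((Complex.continuous_conj.comp
          (continuous_bpt.comp (continuous_apply 0))).pow n).aestronglyMeasurable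
      · refine Filter.Eventually.of_forall fun ζ => ?_
        rw [norm_pow, RCLike.norm_conj, bpt_norm, one_pow]
    have h := hasSum_integral_mul_geom hfint hξ
    have ht : ∀ m : ℕ,
        (∫ ζ, ((starRingEnd ℂ) (bpt (ζ 0)) ^ n * (x : Torus 1 → ℂ) ζ) * bpt (ζ 0) ^ m
          ∂(torusMeasure 1))
        = if n ≤ m then ∫ ζ, (x : Torus 1 → ℂ) ζ * bpt (ζ 0) ^ (m - n) ∂(torusMeasure 1)
          else 0 := by
      intro m
      rcases le_or_gt n m with hnm | hnm
      · rw [if_pos hnm]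
        apply integral_congr_ae
        apply Filter.Eventually.of_forall
        intro ζ
        have h1 : (starRingEnd ℂ) (bpt (ζ 0)) ^ n * bpt (ζ 0) ^ n = 1 := by
          rw [← mul_pow, hcw ζ, one_pow]
        have h2 : bpt (ζ 0) ^ m = bpt (ζ 0) ^ n * bpt (ζ 0) ^ (m - n) := by
          rw [← pow_add]; congr 1; omega
        calc ((starRingEnd ℂ) (bpt (ζ 0)) ^ n * (x : Torus 1 → ℂ) ζ) * bpt (ζ 0) ^ m
            = ((starRingEnd ℂ) (bpt (ζ 0)) ^ n * bpt (ζ 0) ^ n)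
              * ((x : Torus 1 → ℂ) ζ * bpt (ζ 0) ^ (m - n)) := by rw [h2]; ring
          _ = (x : Torus 1 → ℂ) ζ * bpt (ζ 0) ^ (m - n) := by rw [h1, one_mul]
      · rw [if_neg (not_le.mpr hnm)]
        rw [← horth (n - m)]
        apply integral_congr_ae
        apply Filter.Eventually.of_forall
        intro ζ
        have h1 : (starRingEnd ℂ) (bpt (ζ 0)) ^ m * bpt (ζ 0) ^ m = 1 := by
          rw [← mul_pow, hcw ζ, one_pow]
        have h2 : (starRingEnd ℂ) (bpt (ζ 0)) ^ n
            = (starRingEnd ℂ) (bpt (ζ 0)) ^ (n - m) * (starRingEnd ℂ) (bpt (ζ 0)) ^ m := by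
          rw [← pow_add]; congr 1; omega
        calc ((starRingEnd ℂ) (bpt (ζ 0)) ^ n * (x : Torus 1 → ℂ) ζ) * bpt (ζ 0) ^ m
            = ((starRingEnd ℂ) (bpt (ζ 0)) ^ m * bpt (ζ 0) ^ m)
              * ((starRingEnd ℂ) (bpt (ζ 0)) ^ (n - m) * (x : Torus 1 → ℂ) ζ) := by
                rw [h2]; ring
          _ = (starRingEnd ℂ) (bpt (ζ 0)) ^ (n - m) * (x : Torus 1 → ℂ) ζ := by
                rw [h1, one_mul]
    simp only [ht] at h
    -- target HasSum by reindexing hA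
    have hginj : Function.Injective (fun j : ℕ => n + j) := fun a b hab => by
      simp only [] at hab; omega
    have hvan : ∀ m ∉ Set.range (fun j : ℕ => n + j),
        (starRingEnd ℂ) ξ ^ m *
          (if n ≤ m then ∫ ζ, (x : Torus 1 → ℂ) ζ * bpt (ζ 0) ^ (m - n) ∂(torusMeasure 1)
            else 0) = 0 := by
      intro m hm
      have : ¬ n ≤ m := fun hle => hm ⟨m - n, by show n + (m - n) = m; omega⟩
      rw [if_neg this, mul_zero]
    have hcomp : ((fun m => (starRingEnd ℂ) ξ ^ m *
          (if n ≤ m then ∫ ζ, (x : Torus 1 → ℂ) ζ * bpt (ζ 0) ^ (m - n) ∂(torusMeasure 1)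
            else 0)) ∘ (fun j : ℕ => n + j))
        = fun j => (starRingEnd ℂ) ξ ^ n * ((starRingEnd ℂ) ξ ^ j *
            ∫ ζ, (x : Torus 1 → ℂ) ζ * bpt (ζ 0) ^ j ∂(torusMeasure 1)) := by
      funext j
      simp only [Function.comp_apply, Nat.le_add_right n j, if_pos, add_tsub_cancel_left,
        pow_add]
      ring
    have hS : HasSum (fun m => (starRingEnd ℂ) ξ ^ m *
          (if n ≤ m then ∫ ζ, (x : Torus 1 → ℂ) ζ * bpt (ζ 0) ^ (m - n) ∂(torusMeasure 1)
            else 0))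
        ((starRingEnd ℂ) ξ ^ n * ∫ ζ, (x : Torus 1 → ℂ) ζ * K ζ ∂(torusMeasure 1)) := by
      rw [← Function.Injective.hasSum_iff hginj hvan, hcomp]
      exact hA.mul_left _
    have hval := h.unique hS
    rw [← hval]
    apply integral_congr_ae
    apply Filter.Eventually.of_forall
    intro ζ
    have hK' : K ζ = (1 - (starRingEnd ℂ) ξ * bpt (ζ 0))⁻¹ := by rw [hKinv]
    simp only [hK']
    ring
  -- Claim 2 : ∫ conj(w)^n K = ξ̄^n
  have hClaim2 : ∀ n : ℕ,
      ∫ ζ, (starRingEnd ℂ) (bpt (ζ 0)) ^ n * K ζ ∂(torusMeasure 1)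
        = (starRingEnd ℂ) ξ ^ n := by
    intro n
    have hfint : Integrable (fun ζ : Torus 1 => (starRingEnd ℂ) (bpt (ζ 0)) ^ n)
        (torusMeasure 1) := by
      have h1 : Integrable
          (fun ζ : Torus 1 => (starRingEnd ℂ) (bpt (ζ 0)) ^ n * (1 : ℂ)) (torusMeasure 1) := by
        apply (integrable_const (1 : ℂ)).bdd_mul (c := 1)
        · exact ((Complex.continuous_conj.comp
            (continuous_bpt.comp (continuous_apply 0))).pow n).aestronglyMeasurable
        · refine Filter.Eventually.of_forall fun ζ => ?_
          rw [norm_pow, RCLike.norm_conj, bpt_norm, one_pow]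
      simpa using h1
    have h := hasSum_integral_mul_geom hfint hξ
    have ht : ∀ m : ℕ,
        (∫ ζ, (starRingEnd ℂ) (bpt (ζ 0)) ^ n * bpt (ζ 0) ^ m ∂(torusMeasure 1))
          = if m = n then (1 : ℂ) else 0 := by
      intro m
      rw [← integral_char m n]
      exact integral_congr_ae (Filter.Eventually.of_forall fun ζ => mul_comm _ _)
    simp only [ht] at h
    have hfun : (fun m : ℕ => (starRingEnd ℂ) ξ ^ m * (if m = n then (1:ℂ) else 0))
        = fun m => if m = n then (starRingEnd ℂ) ξ ^ n else 0 := by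
      funext m
      split_ifs with hmn
      · subst hmn; rw [mul_one]
      · rw [mul_zero]
    rw [hfun] at h
    have hval := h.unique (hasSum_ite_eq n ((starRingEnd ℂ) ξ ^ n))
    rw [← hval]
    apply integral_congr_ae
    apply Filter.Eventually.of_forall
    intro ζ
    have hK' : K ζ = (1 - (starRingEnd ℂ) ξ * bpt (ζ 0))⁻¹ := by rw [hKinv]
    simp only [hK']
  -- inner products with monomials
  have hinner_eq : ∀ (g : Torus 1 → ℂ) (hg : MemLp g 2 (torusMeasure 1)) (k : Fin 1 → ℕ),
      (inner ℂ ((mon_memℒp k).toLp (mon k)) (hg.toLp g) : ℂ)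
        = ∫ ζ, (starRingEnd ℂ) (bpt (ζ 0)) ^ (k 0) * g ζ ∂(torusMeasure 1) := by
    intro g hg k
    rw [L2.inner_def]
    apply integral_congr_ae
    filter_upwards [MemLp.coeFn_toLp (mon_memℒp k), MemLp.coeFn_toLp hg] with ζ h1 h2
    rw [RCLike.inner_apply, h1, h2]
    simp [mon, Fin.prod_univ_one, map_pow]
    ring
  -- membership of K in the Hardy space
  have hKmem : hK.toLp K ∈ hardy 1 := by
    set S : ℕ → L2T 1 := fun N => ∑ m ∈ Finset.range N,
      (starRingEnd ℂ) ξ ^ m • (mon_memℒp (fun _ : Fin 1 => m)).toLp (mon (fun _ : Fin 1 => m))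
      with hSdef
    have hSmem : ∀ N, S N ∈ hardy 1 := by
      intro N
      refine Submodule.sum_mem _ fun m _ => Submodule.smul_mem _ _ ?_
      exact (Submodule.le_topologicalClosure _) (Submodule.subset_span ⟨_, rfl⟩)
    have hScoe : ∀ N, (S N : Torus 1 → ℂ) =ᵐ[torusMeasure 1]
        fun ζ => ∑ m ∈ Finset.range N, ((starRingEnd ℂ) ξ * bpt (ζ 0)) ^ m := by
      intro N
      induction N with
      | zero =>
          simp only [hSdef, Finset.range_zero, Finset.sum_empty]
          filter_upwards [Lp.coeFn_zero ℂ 2 (torusMeasure 1)] with ζ h1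
          simpa using h1
      | succ N ih =>
          have h1 : S (N + 1) = S N + (starRingEnd ℂ) ξ ^ N •
              (mon_memℒp (fun _ : Fin 1 => N)).toLp (mon (fun _ : Fin 1 => N)) := by
            rw [hSdef]
            exact Finset.sum_range_succ _ _
          rw [h1]
          filter_upwards [Lp.coeFn_add (S N) ((starRingEnd ℂ) ξ ^ N •
              (mon_memℒp (fun _ : Fin 1 => N)).toLp (mon (fun _ : Fin 1 => N))),
            Lp.coeFn_smul ((starRingEnd ℂ) ξ ^ N)
              ((mon_memℒp (fun _ : Fin 1 => N)).toLp (mon (fun _ : Fin 1 => N))),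
            MemLp.coeFn_toLp (mon_memℒp (fun _ : Fin 1 => N)), ih] with ζ h2 h3 h4 h5
          rw [h2, Pi.add_apply, h5, h3, Pi.smul_apply, h4, Finset.sum_range_succ]
          simp [mon, Fin.prod_univ_one, mul_pow]
    have hnorm : ∀ N, ‖hK.toLp K - S N‖ ≤ ‖ξ‖ ^ N / (1 - ‖ξ‖) := by
      intro N
      have hb : ∀ ζ : Torus 1,
          ‖K ζ - ∑ m ∈ Finset.range N, ((starRingEnd ℂ) ξ * bpt (ζ 0)) ^ m‖
            ≤ ‖ξ‖ ^ N / (1 - ‖ξ‖) := by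
        intro ζ
        set u := (starRingEnd ℂ) ξ * bpt (ζ 0) with hu
        have hun : ‖u‖ = ‖ξ‖ := by rw [hu, norm_mul, RCLike.norm_conj, bpt_norm, mul_one]
        have hu1 : ‖u‖ < 1 := by rw [hun]; exact hξ
        have h1u : (1 : ℂ) - u ≠ 0 := by
          intro h
          rw [sub_eq_zero] at h
          rw [← h, norm_one] at hu1
          exact lt_irrefl _ hu1
        have hune : u ≠ 1 := by
          intro h; rw [h, norm_one] at hu1; exact lt_irrefl _ hu1
        have hKu : K ζ = (1 - u)⁻¹ := by rw [hKinv]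
        have h1u' : u - 1 ≠ 0 := sub_ne_zero.mpr hune
        have hdiff : K ζ - ∑ m ∈ Finset.range N, u ^ m = u ^ N * (1 - u)⁻¹ := by
          rw [hKu, geom_sum_eq hune]
          field_simp [h1u, h1u']
          ring
        rw [hdiff, norm_mul, norm_pow, norm_inv]
        have h1 : 1 - ‖ξ‖ ≤ ‖1 - u‖ := by
          have := norm_sub_norm_le (1 : ℂ) u
          rw [norm_one, hun] at this
          linarith
        have h2 : (0:ℝ) < 1 - ‖ξ‖ := by linarith
        rw [div_eq_mul_inv]
        exact mul_le_mul (pow_le_pow_left₀ (norm_nonneg _) (le_of_eq hun) N)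
          (inv_anti₀ h2 h1) (by positivity) (by positivity)
      have hsub : ((hK.toLp K - S N : L2T 1) : Torus 1 → ℂ) =ᵐ[torusMeasure 1]
          fun ζ => K ζ - ∑ m ∈ Finset.range N, ((starRingEnd ℂ) ξ * bpt (ζ 0)) ^ m := by
        filter_upwards [Lp.coeFn_sub (hK.toLp K) (S N), MemLp.coeFn_toLp hK, hScoe N]
          with ζ h1 h2 h3
        rw [h1, Pi.sub_apply, h2, h3]
      rw [Lp.norm_def, eLpNorm_congr_ae hsub]
      have hle := eLpNorm_le_of_ae_bound (μ := torusMeasure 1) (p := 2)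
        (Filter.Eventually.of_forall hb)
      rw [measure_univ, ENNReal.one_rpow, one_mul] at hle
      have h2' : (0:ℝ) < 1 - ‖ξ‖ := by linarith
      exact ENNReal.toReal_le_of_le_ofReal (div_nonneg (by positivity) h2'.le) hle
    have h0 : Filter.Tendsto (fun N : ℕ => ‖ξ‖ ^ N / (1 - ‖ξ‖)) Filter.atTop (𝓝 0) := by
      have := tendsto_pow_atTop_nhds_zero_of_lt_one (norm_nonneg ξ) hξ
      simpa using this.div_const (1 - ‖ξ‖)
    have htend : Filter.Tendsto S Filter.atTop (𝓝 (hK.toLp K)) := by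
      rw [tendsto_iff_norm_sub_tendsto_zero]
      apply squeeze_zero (fun N => norm_nonneg _) (fun N => ?_) h0
      rw [norm_sub_rev]
      exact hnorm N
    exact (Submodule.isClosed_topologicalClosure _).mem_of_tendsto htend
      (Filter.Eventually.of_forall hSmem)
  -- orthogonality of the difference
  have hinner0 : ∀ k : Fin 1 → ℕ,
      (inner ℂ ((mon_memℒp k).toLp (mon k)) (hxK.toLp _
        - (∫ ζ, (x : Torus 1 → ℂ) ζ * (poisson (fun _ => ξ) ζ : ℂ) ∂(torusMeasure 1))
          • hK.toLp K) : ℂ) = 0 := by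
    intro k
    rw [inner_sub_right, inner_smul_right, hinner_eq _ hxK k, hinner_eq _ hK k,
      hClaim1 (k 0), hClaim2 (k 0), hc]
    ring
  have hVorth : hxK.toLp _
      - (∫ ζ, (x : Torus 1 → ℂ) ζ * (poisson (fun _ => ξ) ζ : ℂ) ∂(torusMeasure 1))
        • hK.toLp K ∈ (hardy 1)ᗮ := by
    rw [Submodule.mem_orthogonal']
    intro u hu
    have hker : hardy 1 ≤ LinearMap.ker (innerSL ℂ (hxK.toLp _
        - (∫ ζ, (x : Torus 1 → ℂ) ζ * (poisson (fun _ => ξ) ζ : ℂ) ∂(torusMeasure 1))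
          • hK.toLp K) : L2T 1 →ₗ[ℂ] ℂ) := by
      apply Submodule.topologicalClosure_minimal
      · rw [Submodule.span_le]
        rintro _ ⟨k, rfl⟩
        simp only [SetLike.mem_coe, LinearMap.mem_ker, ContinuousLinearMap.coe_coe,
          innerSL_apply_apply]
        exact inner_eq_zero_symm.mp (hinner0 k)
      · exact ContinuousLinearMap.isClosed_ker _
    have := hker hu
    simpa only [LinearMap.mem_ker, ContinuousLinearMap.coe_coe, innerSL_apply_apply] using this
  rw [← Submodule.starProjection_apply]
  exact Submodule.eq_starProjection_of_mem_orthogonal (Submodule.smul_mem _ _ hKmem) hVorth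
end HardyPolydisc
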